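/- In Fenchel–Nielsen coordinates on the torus Teichmüller space, the Weil–Petersson Kähler form satisfies Wolpert's formula: with ℓ = 1/√v and t = −u/√v (where τ = u + iv ∈ ℍ), one has dt ∧ dℓ = (du ∧ dv)/(2v²) = ω_WP. -/

import Mathlib

/-- Wolpert's formula on the torus Teichmüller space: with Fenchel–Nielsen
functions `ℓ(u,v) = 1/√v` and `t(u,v) = −u/√v` on `ℍ` (coordinates
`τ = u + iv`, `v > 0`), the wedge `dt ∧ dℓ`, whose coefficient is
`(∂t/∂u)(∂ℓ/∂v) − (∂t/∂v)(∂ℓ/∂u)`, equals the Weil–Petersson form coefficient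
`1/(2v²)` of `ω_WP = (du ∧ dv)/(2v²)`. -/
theorem wolpert_formula_torus (u v : ℝ) (hv : 0 < v) :
    (deriv (fun u' : ℝ => -u' / Real.sqrt v) u)
        * (deriv (fun v' : ℝ => 1 / Real.sqrt v') v)
      - (deriv (fun v' : ℝ => -u / Real.sqrt v') v)
        * (deriv (fun u' : ℝ => (1 : ℝ) / Real.sqrt v) u)
      = 1 / (2 * v^2) := by
  have hs : Real.sqrt v ≠ 0 := ne_of_gt (Real.sqrt_pos.mpr hv)
  have h1 : deriv (fun u' : ℝ => -u' / Real.sqrt v) u = -1 / Real.sqrt v := by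
    have : HasDerivAt (fun u' : ℝ => -u' / Real.sqrt v) (-1 / Real.sqrt v) u :=
      ((hasDerivAt_id u).neg).div_const _
    exact this.deriv
  have hsq : HasDerivAt Real.sqrt (1 / (2 * Real.sqrt v)) v :=
    Real.hasDerivAt_sqrt (ne_of_gt hv)
  have h2 : deriv (fun v' : ℝ => 1 / Real.sqrt v') v
      = -(1 / (2 * Real.sqrt v)) / (Real.sqrt v) ^ 2 := by
    have h := hsq.inv hs
    have : HasDerivAt (fun v' : ℝ => 1 / Real.sqrt v')
        (-(1 / (2 * Real.sqrt v)) / (Real.sqrt v) ^ 2) v := by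
      simpa [one_div, Pi.inv_def] using h
    exact this.deriv
  have h4 : deriv (fun u' : ℝ => (1 : ℝ) / Real.sqrt v) u = 0 := deriv_const _ _
  rw [h1, h2, h4]
  have hvv : Real.sqrt v ^ 2 = v := Real.sq_sqrt hv.le
  field_simp
  ring_nf
  rw [show √v ^ 4 = √v ^ 2 * √v ^ 2 by ring, Real.sq_sqrt hv.le]
  ring
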